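/- Let s ∈ ℂ with Re(s) > 1 and β ∈ ℂ with Re(β) > 0. Then there exists a constant C > 0 such that for every integer k ≥ 1 and every real r with |r| ≤ 1: |H(r, g_{s+2k,β})| ≤ C · k^{−Re(β)/2}, where g_{s,β}(u) := 2^{1/2}√π (Γ(s−1/2)/Γ(s)) cosh(u)^{−(s−1/2)} tanh(u)^{β} and H(r,g) := 2∫₀^∞ cos(ur) g(u) du. -/

import Mathlib

open MeasureTheory

/-- `H(r,g) := 2 ∫₀^∞ cos(ur) g(u) du`. -/
noncomputable def waveH (r : ℂ) (g : ℝ → ℂ) : ℂ :=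
  2 * ∫ u in Set.Ioi (0 : ℝ), Complex.cos (u * r) * g u

/-- The test function `g_{s,β}(u) = 2^{1/2}√π (Γ(s-1/2)/Γ(s)) cosh(u)^{-(s-1/2)} tanh(u)^β`. -/
noncomputable def gTestBeta (s β : ℂ) (u : ℝ) : ℂ :=
  (2 : ℂ) ^ ((1 / 2 : ℂ)) * (Real.sqrt Real.pi : ℂ) *
    (Complex.Gamma (s - 1 / 2) / Complex.Gamma s) *
      ((Real.cosh u : ℂ) ^ (-(s - 1 / 2))) * ((Real.tanh u : ℂ) ^ β)

section helperLemmas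

lemma aux_rpow_exp {p : ℝ} (hp : 0 < p) {z : ℝ} (hz : 0 ≤ z) :
    z ^ p * Real.exp (-z) ≤ Real.exp (p * Real.log p - p) := by
  rcases eq_or_lt_of_le hz with h0 | h0
  · rw [← h0, Real.zero_rpow hp.ne', zero_mul]
    positivity
  · rw [Real.rpow_def_of_pos h0, ← Real.exp_add]
    apply Real.exp_le_exp.mpr
    have h1 := Real.log_le_sub_one_of_pos (show 0 < z / p by positivity)
    rw [Real.log_div h0.ne' hp.ne'] at h1
    have h2 : p * (Real.log z - Real.log p) ≤ p * (z / p - 1) :=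
      mul_le_mul_of_nonneg_left h1 hp.le
    have h3 : p * (z / p - 1) = z - p := by field_simp
    nlinarith

lemma aux_y {p : ℝ} (hp : 0 < p) {k : ℕ} (hk : 1 ≤ k) {y : ℝ} (hy0 : 0 ≤ y) (hy1 : y ≤ 1) :
    y ^ p * (1 - y) ^ (k : ℝ) ≤ Real.exp (p * Real.log p - p) * (k : ℝ) ^ (-p) := by
  have hkpos : (0:ℝ) < k := by exact_mod_cast hk
  have h1 : (1 - y) ^ (k : ℝ) ≤ Real.exp (-((k:ℝ) * y)) := by
    have he : (1 - y) ≤ Real.exp (-y) := by linarith [Real.add_one_le_exp (-y)]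
    calc (1 - y) ^ (k:ℝ) ≤ (Real.exp (-y)) ^ (k:ℝ) :=
          Real.rpow_le_rpow (by linarith) he (Nat.cast_nonneg k)
      _ = Real.exp (-((k:ℝ) * y)) := by rw [← Real.exp_mul]; ring_nf
  have h2 : y ^ p * (1 - y) ^ (k:ℝ) ≤ y ^ p * Real.exp (-((k:ℝ) * y)) :=
    mul_le_mul_of_nonneg_left h1 (Real.rpow_nonneg hy0 p)
  have hkp : ((k:ℝ)) ^ p ≠ 0 := (Real.rpow_pos_of_pos hkpos p).ne'
  have h3 : y ^ p * Real.exp (-((k:ℝ) * y))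
      = (k:ℝ) ^ (-p) * (((k:ℝ) * y) ^ p * Real.exp (-((k:ℝ) * y))) := by
    rw [Real.mul_rpow hkpos.le hy0, Real.rpow_neg hkpos.le]
    field_simp
  calc y ^ p * (1 - y) ^ (k:ℝ) ≤ y ^ p * Real.exp (-((k:ℝ) * y)) := h2
    _ = (k:ℝ) ^ (-p) * (((k:ℝ) * y) ^ p * Real.exp (-((k:ℝ) * y))) := h3
    _ ≤ (k:ℝ) ^ (-p) * Real.exp (p * Real.log p - p) :=
        mul_le_mul_of_nonneg_left (aux_rpow_exp hp (by positivity)) (Real.rpow_nonneg hkpos.le _)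
    _ = Real.exp (p * Real.log p - p) * (k:ℝ) ^ (-p) := mul_comm _ _

lemma beta_norm_le (z : ℂ) (hz : (3:ℝ)/2 ≤ z.re) :
    ‖Complex.betaIntegral (z - 1/2) (1/2)‖ ≤ 2 := by
  have hval : (∫ t in (0:ℝ)..1, (1 - t) ^ (-(1/2) : ℝ)) = 2 := by
    rw [show (fun t : ℝ => (1 - t) ^ (-(1/2) : ℝ)) = (fun t : ℝ => ((fun x : ℝ => x ^ (-(1/2):ℝ)) (1 - t))) from rfl,
      intervalIntegral.integral_comp_sub_left (fun x : ℝ => x ^ (-(1/2):ℝ)) 1]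
    norm_num
    rw [integral_rpow (Or.inl (by norm_num))]
    norm_num
  have hInt : IntervalIntegrable (fun t : ℝ => (1 - t) ^ (-(1/2) : ℝ)) volume 0 1 := by
    have := (intervalIntegral.intervalIntegrable_rpow' (a := 0) (b := 1)
      (by norm_num : (-1:ℝ) < -(1/2))).comp_sub_left 1
    simpa using this.symm
  have hae : ∀ᵐ t : ℝ ∂(volume.restrict (Set.uIoc (0:ℝ) 1)),
      ‖(t : ℂ) ^ (z - 1/2 - 1) * ((1:ℂ) - (t:ℂ)) ^ ((1/2 : ℂ) - 1)‖ ≤ (1 - t) ^ (-(1/2) : ℝ) := by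
    rw [Set.uIoc_of_le (zero_le_one)]
    refine (ae_restrict_iff' measurableSet_Ioc).mpr (Filter.Eventually.of_forall fun t ht => ?_)
    obtain ⟨ht0, ht1⟩ := ht
    rw [norm_mul]
    have h1 : ‖(t : ℂ) ^ (z - 1/2 - 1)‖ ≤ 1 := by
      rw [Complex.norm_cpow_eq_rpow_re_of_pos ht0]
      apply Real.rpow_le_one ht0.le ht1
      simp only [Complex.sub_re, Complex.one_re]
      norm_num
      linarith
    rcases lt_or_eq_of_le ht1 with h | h
    · have hpos : 0 < 1 - t := by linarith
      have h2 : ‖((1:ℂ) - (t:ℂ)) ^ ((1/2 : ℂ) - 1)‖ = (1 - t) ^ (-(1/2) : ℝ) := by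
        rw [show ((1:ℂ) - (t:ℂ)) = (((1 - t : ℝ)):ℂ) by push_cast; ring,
          Complex.norm_cpow_eq_rpow_re_of_pos hpos]
        norm_num
      rw [h2]
      calc ‖(t : ℂ) ^ (z - 1/2 - 1)‖ * ((1 - t) ^ (-(1/2) : ℝ))
          ≤ 1 * ((1 - t) ^ (-(1/2) : ℝ)) :=
            mul_le_mul_of_nonneg_right h1 (Real.rpow_nonneg hpos.le _)
        _ = (1 - t) ^ (-(1/2) : ℝ) := one_mul _
    · subst h
      have hz0 : ((1:ℂ) - ((1:ℝ):ℂ)) = 0 := by norm_num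
      rw [hz0, Complex.zero_cpow (by norm_num : ((1/2:ℂ) - 1) ≠ 0), norm_zero, mul_zero,
        sub_self, Real.zero_rpow (by norm_num : (-(1/2):ℝ) ≠ 0)]
  have := intervalIntegral.norm_integral_le_abs_of_norm_le hae hInt
  rw [Complex.betaIntegral]
  calc ‖∫ t in (0:ℝ)..1, (t : ℂ) ^ (z - 1/2 - 1) * ((1:ℂ) - (t:ℂ)) ^ ((1/2 : ℂ) - 1)‖
      ≤ |∫ t in (0:ℝ)..1, (1 - t) ^ (-(1/2) : ℝ)| := this
    _ = 2 := by rw [hval]; norm_num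

lemma ratio_bound (z : ℂ) (hz : (3:ℝ)/2 ≤ z.re) :
    ‖Complex.Gamma (z - 1/2) / Complex.Gamma z‖ ≤ 2 / Real.sqrt Real.pi := by
  have h1 : 0 < (z - 1/2).re := by
    simp only [Complex.sub_re]
    norm_num
    linarith
  have h2 : (0:ℝ) < ((1:ℂ)/2).re := by norm_num
  have key := Complex.Gamma_mul_Gamma_eq_betaIntegral h1 h2
  rw [show z - 1/2 + 1/2 = z by ring] at key
  have hΓz : Complex.Gamma z ≠ 0 := Complex.Gamma_ne_zero_of_re_pos (by linarith)
  have hΓh : Complex.Gamma (1/2 : ℂ) ≠ 0 := Complex.Gamma_ne_zero_of_re_pos h2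
  have hratio : Complex.Gamma (z - 1/2) / Complex.Gamma z
      = Complex.betaIntegral (z - 1/2) (1/2) / Complex.Gamma (1/2) := by
    rw [div_eq_div_iff hΓz hΓh]
    linear_combination key
  have hΓhalf : ‖Complex.Gamma (1/2 : ℂ)‖ = Real.sqrt Real.pi := by
    rw [Complex.Gamma_one_half_eq, 
      Complex.norm_cpow_eq_rpow_re_of_pos Real.pi_pos, Real.sqrt_eq_rpow]
    norm_num
  rw [hratio, norm_div, hΓhalf]
  rw [div_le_div_iff_of_pos_right (Real.sqrt_pos.mpr Real.pi_pos)]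
  exact beta_norm_le z hz

lemma tanh_pos' {u : ℝ} (hu : 0 < u) : 0 < Real.tanh u := by
  rw [Real.tanh_eq_sinh_div_cosh]
  exact div_pos (by rwa [← Real.sinh_pos_iff] at hu) (Real.cosh_pos u)

lemma tanh_lt_one' (u : ℝ) : Real.tanh u < 1 := by
  rw [Real.tanh_eq_sinh_div_cosh, div_lt_one (Real.cosh_pos u)]
  have h := Real.cosh_sub_sinh u
  have := Real.exp_pos (-u)
  linarith

lemma one_sub_tanh_sq {u : ℝ} : 1 - Real.tanh u ^ 2 = Real.cosh u ^ (-(2:ℝ)) := by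
  have hc := Real.cosh_pos u
  have hid := Real.cosh_sq_sub_sinh_sq u
  have h2 : Real.cosh u ^ (-(2:ℝ)) = (Real.cosh u ^ (2:ℕ))⁻¹ := by
    rw [Real.rpow_neg hc.le, show (2:ℝ) = ((2:ℕ):ℝ) by norm_num, Real.rpow_natCast]
  rw [Real.tanh_eq_sinh_div_cosh, div_pow, h2]
  field_simp
  linarith [hid]

/-- Pointwise bound for the test function. -/
lemma gTestBeta_norm_le (s β : ℂ) (hs : 1 < s.re) (hβ : 0 < β.re) (k : ℕ) (hk : 1 ≤ k)
    {u : ℝ} (hu : 0 < u) :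
    ‖gTestBeta (s + 2 * k) β u‖ ≤
      ((2:ℝ) ^ ((1:ℝ)/2) * Real.sqrt Real.pi * (2 / Real.sqrt Real.pi) *
        Real.exp (β.re/2 * Real.log (β.re/2) - β.re/2) * (2:ℝ) ^ (s.re - 1/2)) *
        ((k:ℝ) ^ (-(β.re/2)) * Real.exp (-(s.re - 1/2) * u)) := by
  have hc := Real.cosh_pos u
  have hT0 := tanh_pos' hu
  have hT1 := tanh_lt_one' u
  have hkpos : (0:ℝ) < k := by exact_mod_cast hk
  have hzre : (s + 2 * (k:ℂ)).re = s.re + 2 * k := by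
    simp [Complex.add_re, Complex.mul_re]
  -- norms of the factors
  have n1 : ‖(2:ℂ) ^ ((1/2 : ℂ))‖ = (2:ℝ) ^ ((1:ℝ)/2) := by
    rw [show (2:ℂ) = ((2:ℝ):ℂ) by norm_num, 
      Complex.norm_cpow_eq_rpow_re_of_pos (by norm_num)]
    norm_num
  have n2 : ‖((Real.sqrt Real.pi : ℝ) : ℂ)‖ = Real.sqrt Real.pi := by
    rw [Complex.norm_real, Real.norm_eq_abs, abs_of_nonneg (Real.sqrt_nonneg _)]
  have n3 : ‖Complex.Gamma (s + 2 * (k:ℂ) - 1/2) / Complex.Gamma (s + 2 * (k:ℂ))‖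
      ≤ 2 / Real.sqrt Real.pi := by
    apply ratio_bound
    rw [hzre]
    have : (1:ℝ) ≤ (k:ℝ) := by exact_mod_cast hk
    linarith
  have n4 : ‖((Real.cosh u : ℂ)) ^ (-(s + 2 * (k:ℂ) - 1/2))‖
      = Real.cosh u ^ (-(s.re - 1/2)) * Real.cosh u ^ (-(2 * (k:ℝ))) := by
    rw [Complex.norm_cpow_eq_rpow_re_of_pos hc,
      ← Real.rpow_add hc]
    congr 1
    simp only [Complex.neg_re, Complex.sub_re, hzre]
    norm_num
    ring
  have n5 : ‖((Real.tanh u : ℂ)) ^ β‖ = Real.tanh u ^ β.re := by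
    rw [Complex.norm_cpow_eq_rpow_re_of_pos hT0]
  -- the key decay estimate
  have hp2 : 0 < β.re / 2 := by linarith
  have key : Real.tanh u ^ β.re * Real.cosh u ^ (-(2 * (k:ℝ)))
      ≤ Real.exp (β.re/2 * Real.log (β.re/2) - β.re/2) * (k:ℝ) ^ (-(β.re/2)) := by
    have e_a : (Real.tanh u ^ (2:ℕ)) ^ (β.re/2 : ℝ) = Real.tanh u ^ β.re := by
      rw [← Real.rpow_natCast (Real.tanh u) 2, ← Real.rpow_mul hT0.le]
      norm_num
      congr 1
      ring
    have e_b : (1 - Real.tanh u ^ (2:ℕ)) ^ ((k:ℕ):ℝ) = Real.cosh u ^ (-(2 * (k:ℝ))) := by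
      rw [one_sub_tanh_sq, ← Real.rpow_mul hc.le]
      ring_nf
    have hy0 : (0:ℝ) ≤ Real.tanh u ^ (2:ℕ) := by positivity
    have hy1 : Real.tanh u ^ (2:ℕ) ≤ 1 := by nlinarith
    have := aux_y hp2 hk hy0 hy1
    rw [e_a, e_b] at this
    exact this
  have hcoshA : Real.cosh u ^ (-(s.re - 1/2)) ≤ (2:ℝ) ^ (s.re - 1/2) * Real.exp (-(s.re - 1/2) * u) := by
    have hc2 : Real.exp u / 2 ≤ Real.cosh u := by
      rw [Real.cosh_eq]
      have := Real.exp_pos (-u)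
      linarith
    have h := Real.rpow_le_rpow_of_nonpos (by positivity : (0:ℝ) < Real.exp u / 2) hc2
      (by linarith : -(s.re - 1/2) ≤ 0)
    calc Real.cosh u ^ (-(s.re - 1/2)) ≤ (Real.exp u / 2) ^ (-(s.re - 1/2)) := h
      _ = (2:ℝ) ^ (s.re - 1/2) * Real.exp (-(s.re - 1/2) * u) := by
          have h2ne : ((2:ℝ) ^ (s.re - 1/2)) ≠ 0 := by positivity
          rw [Real.div_rpow (Real.exp_pos u).le (by norm_num : (0:ℝ) ≤ 2),
            ← Real.exp_mul, Real.rpow_neg (by norm_num : (0:ℝ) ≤ 2)]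
          field_simp
  -- assemble
  have expand : ‖gTestBeta (s + 2 * k) β u‖
      = ‖(2:ℂ) ^ ((1/2 : ℂ))‖ * ‖((Real.sqrt Real.pi : ℝ) : ℂ)‖ *
        ‖Complex.Gamma (s + 2 * (k:ℂ) - 1/2) / Complex.Gamma (s + 2 * (k:ℂ))‖ *
        ‖((Real.cosh u : ℂ)) ^ (-(s + 2 * (k:ℂ) - 1/2))‖ * ‖((Real.tanh u : ℂ)) ^ β‖ := by
    rw [gTestBeta]
    push_cast
    rw [norm_mul, norm_mul, norm_mul, norm_mul]
  rw [expand, n1, n2, n4, n5]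
  have hRnn : (0:ℝ) ≤ ‖Complex.Gamma (s + 2 * (k:ℂ) - 1/2) / Complex.Gamma (s + 2 * (k:ℂ))‖ :=
    norm_nonneg _
  calc (2:ℝ) ^ ((1:ℝ)/2) * Real.sqrt Real.pi *
        ‖Complex.Gamma (s + 2 * (k:ℂ) - 1/2) / Complex.Gamma (s + 2 * (k:ℂ))‖ *
        (Real.cosh u ^ (-(s.re - 1/2)) * Real.cosh u ^ (-(2 * (k:ℝ)))) * Real.tanh u ^ β.re
      = ((2:ℝ) ^ ((1:ℝ)/2) * Real.sqrt Real.pi *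
          ‖Complex.Gamma (s + 2 * (k:ℂ) - 1/2) / Complex.Gamma (s + 2 * (k:ℂ))‖) *
        (Real.tanh u ^ β.re * Real.cosh u ^ (-(2 * (k:ℝ)))) * Real.cosh u ^ (-(s.re - 1/2)) := by
        ring
    _ ≤ ((2:ℝ) ^ ((1:ℝ)/2) * Real.sqrt Real.pi * (2 / Real.sqrt Real.pi)) *
        (Real.exp (β.re/2 * Real.log (β.re/2) - β.re/2) * (k:ℝ) ^ (-(β.re/2))) *
        ((2:ℝ) ^ (s.re - 1/2) * Real.exp (-(s.re - 1/2) * u)) := by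
        have m1 : (0:ℝ) ≤ (2:ℝ) ^ ((1:ℝ)/2) * Real.sqrt Real.pi := by positivity
        have hA : (2:ℝ) ^ ((1:ℝ)/2) * Real.sqrt Real.pi *
            ‖Complex.Gamma (s + 2 * (k:ℂ) - 1/2) / Complex.Gamma (s + 2 * (k:ℂ))‖
            ≤ (2:ℝ) ^ ((1:ℝ)/2) * Real.sqrt Real.pi * (2 / Real.sqrt Real.pi) :=
          mul_le_mul_of_nonneg_left n3 m1
        have hB1nn : (0:ℝ) ≤ Real.tanh u ^ β.re * Real.cosh u ^ (-(2 * (k:ℝ))) :=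
          mul_nonneg (Real.rpow_nonneg hT0.le _) (Real.rpow_nonneg hc.le _)
        have hC1nn : (0:ℝ) ≤ Real.cosh u ^ (-(s.re - 1/2)) := Real.rpow_nonneg hc.le _
        have hA2nn : (0:ℝ) ≤ (2:ℝ) ^ ((1:ℝ)/2) * Real.sqrt Real.pi * (2 / Real.sqrt Real.pi) := by
          positivity
        have hAB2nn : (0:ℝ) ≤ ((2:ℝ) ^ ((1:ℝ)/2) * Real.sqrt Real.pi * (2 / Real.sqrt Real.pi)) *
            (Real.exp (β.re/2 * Real.log (β.re/2) - β.re/2) * (k:ℝ) ^ (-(β.re/2))) := by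
          have := Real.rpow_nonneg hkpos.le (-(β.re/2))
          positivity
        exact mul_le_mul (mul_le_mul hA key hB1nn hA2nn) hcoshA hC1nn hAB2nn
    _ = ((2:ℝ) ^ ((1:ℝ)/2) * Real.sqrt Real.pi * (2 / Real.sqrt Real.pi) *
        Real.exp (β.re/2 * Real.log (β.re/2) - β.re/2) * (2:ℝ) ^ (s.re - 1/2)) *
        ((k:ℝ) ^ (-(β.re/2)) * Real.exp (-(s.re - 1/2) * u)) := by ring

end helperLemmas

/-- for `Re(s) > 1` and `Re(β) > 0` there is `C > 0` with
`|H(r, g_{s+2k,β})| ≤ C k^{-Re(β)/2}` for all `k ≥ 1` and real `|r| ≤ 1`. -/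
theorem statement12 (s β : ℂ) (hs : 1 < s.re) (hβ : 0 < β.re) :
    ∃ C : ℝ, 0 < C ∧ ∀ k : ℕ, 1 ≤ k → ∀ r : ℝ, |r| ≤ 1 →
      ‖waveH r (gTestBeta (s + 2 * k) β)‖ ≤ C * (k : ℝ) ^ (-(β.re / 2)) := by
  set a : ℝ := s.re - 1/2 with ha
  have hap : 0 < a := by rw [ha]; linarith
  set K0 : ℝ := (2:ℝ) ^ ((1:ℝ)/2) * Real.sqrt Real.pi * (2 / Real.sqrt Real.pi) *
      Real.exp (β.re/2 * Real.log (β.re/2) - β.re/2) * (2:ℝ) ^ a with hK0def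
  have hsqrtpi : 0 < Real.sqrt Real.pi := Real.sqrt_pos.mpr Real.pi_pos
  have hK0 : 0 < K0 := by rw [hK0def]; positivity
  set I : ℝ := ∫ u in Set.Ioi (0:ℝ), Real.exp (-a * u) with hIdef
  have hInn : 0 ≤ I := integral_nonneg fun u => (Real.exp_pos _).le
  refine ⟨2 * K0 * (I + 1), by nlinarith, ?_⟩
  intro k hk r hr
  have hkpos : (0:ℝ) < k := by exact_mod_cast hk
  have hkp : (0:ℝ) ≤ (k:ℝ) ^ (-(β.re/2)) := Real.rpow_nonneg hkpos.le _
  have hbound : ∀ u ∈ Set.Ioi (0:ℝ),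
      ‖Complex.cos (u * r) * gTestBeta (s + 2 * k) β u‖ ≤ (K0 * (k:ℝ) ^ (-(β.re/2))) * Real.exp (-a * u) := by
    intro u hu
    rw [norm_mul]
    have hcos : ‖Complex.cos ((u:ℂ) * (r:ℂ))‖ ≤ 1 := by
      rw [show ((u:ℂ) * (r:ℂ)) = (((u * r : ℝ)):ℂ) by push_cast; ring, ← Complex.ofReal_cos,
        Complex.norm_real, Real.norm_eq_abs]
      exact Real.abs_cos_le_one _
    have hg := gTestBeta_norm_le s β hs hβ k hk (Set.mem_Ioi.mp hu)
    calc ‖Complex.cos ((u:ℂ) * (r:ℂ))‖ * ‖gTestBeta (s + 2 * k) β u‖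
        ≤ 1 * (K0 * ((k:ℝ) ^ (-(β.re/2)) * Real.exp (-a * u))) := by
          apply mul_le_mul hcos _ (norm_nonneg _) zero_le_one
          calc ‖gTestBeta (s + 2 * k) β u‖
              ≤ K0 * ((k:ℝ) ^ (-(β.re/2)) * Real.exp (-(s.re - 1/2) * u)) := hg
            _ = K0 * ((k:ℝ) ^ (-(β.re/2)) * Real.exp (-a * u)) := by rw [ha]
      _ = (K0 * (k:ℝ) ^ (-(β.re/2))) * Real.exp (-a * u) := by ring
  have hInt : Integrable (fun u => (K0 * (k:ℝ) ^ (-(β.re/2))) * Real.exp (-a * u))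
      (volume.restrict (Set.Ioi (0:ℝ))) :=
    (exp_neg_integrableOn_Ioi 0 hap).const_mul _
  calc ‖waveH r (gTestBeta (s + 2 * k) β)‖
      = 2 * ‖∫ u in Set.Ioi (0:ℝ), Complex.cos (u * r) * gTestBeta (s + 2 * k) β u‖ := by
        rw [waveH, norm_mul]
        norm_num
    _ ≤ 2 * ∫ u in Set.Ioi (0:ℝ), ‖Complex.cos (u * r) * gTestBeta (s + 2 * k) β u‖ :=
        mul_le_mul_of_nonneg_left (norm_integral_le_integral_norm _) (by norm_num)
    _ ≤ 2 * ∫ u in Set.Ioi (0:ℝ), (K0 * (k:ℝ) ^ (-(β.re/2))) * Real.exp (-a * u) := by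
        apply mul_le_mul_of_nonneg_left _ (by norm_num : (0:ℝ) ≤ 2)
        apply integral_mono_of_nonneg (Filter.Eventually.of_forall fun u => norm_nonneg _) hInt
        exact (ae_restrict_iff' measurableSet_Ioi).mpr (Filter.Eventually.of_forall hbound)
    _ = 2 * ((K0 * (k:ℝ) ^ (-(β.re/2))) * I) := by rw [integral_const_mul]
    _ ≤ 2 * K0 * (I + 1) * (k:ℝ) ^ (-(β.re/2)) := by nlinarith
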